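/- Suppose real sequences x(i), y(i) with 0 < y(0) < x(0) ≤ 2/3 satisfy, for every i ≥ 1 with x(i−1) < 2/3: x(i) ≥ x(i−1)(1 + y(i−1)/5) and y(i) ≥ y(i−1)(1 + x(i−1)/10), and both sequences are non-decreasing. Then there exists i ≤ C·(1/x(0))·(log(x(0)/y(0)) + 1) for an absolute constant C such that x(i) ≥ 2/3. -/

import Mathlib

set_option maxHeartbeats 1000000

/-- Deterministic iteration argument (Lemma 5): the recursive growth inequalities
force x(i) ≥ 2/3 within O((1/x(0))·log(x(0)/y(0))) rounds; C = 100 suffices. -/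
theorem iteration_bound (x y : ℕ → ℝ)
    (hy0 : 0 < y 0) (hxy : y 0 < x 0) (hx0 : x 0 ≤ 2 / 3)
    (hmx : ∀ i, x i ≤ x (i + 1)) (hmy : ∀ i, y i ≤ y (i + 1))
    (hrec : ∀ i : ℕ, 1 ≤ i → x (i - 1) < 2 / 3 →
      x i ≥ x (i - 1) * (1 + y (i - 1) / 5) ∧
      y i ≥ y (i - 1) * (1 + x (i - 1) / 10)) :
    ∃ i : ℕ, (i : ℝ) ≤ 100 * (1 / x 0) * (Real.log (x 0 / y 0) + 1) ∧ x i ≥ 2 / 3 := by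
  by_contra hcon
  push_neg at hcon
  set L := Real.log (x 0 / y 0) with hLdef
  have hx0pos : 0 < x 0 := hy0.trans hxy
  have hLpos : 0 < L := Real.log_pos (by rw [lt_div_iff₀ hy0]; linarith)
  have hxmono : Monotone x := monotone_nat_of_le_succ hmx
  have hymono : Monotone y := monotone_nat_of_le_succ hmy
  have hxge : ∀ i, x 0 ≤ x i := fun i => hxmono (Nat.zero_le i)
  have hyge : ∀ i, y 0 ≤ y i := fun i => hymono (Nat.zero_le i)
  have hxpos : ∀ i, 0 < x i := fun i => hx0pos.trans_le (hxge i)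
  have hypos : ∀ i, 0 < y i := fun i => hy0.trans_le (hyge i)
  set N1 : ℕ := ⌈20 * L / x 0⌉₊ with hN1def
  set N2 : ℕ := ⌈11 / x 0⌉₊ with hN2def
  set N : ℕ := N1 + N2 with hNdef
  -- the total time N fits under the budget
  have hNB : (N : ℝ) ≤ 100 * (1 / x 0) * (L + 1) := by
    have h1 : (N1 : ℝ) ≤ 20 * L / x 0 + 1 :=
      le_of_lt (Nat.ceil_lt_add_one (by positivity))
    have h2 : (N2 : ℝ) ≤ 11 / x 0 + 1 :=
      le_of_lt (Nat.ceil_lt_add_one (by positivity))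
    have hxinv : (3:ℝ)/2 ≤ 1 / x 0 := by
      rw [le_div_iff₀ hx0pos]; linarith
    have hcast : (N : ℝ) = (N1 : ℝ) + (N2 : ℝ) := by push_cast [hNdef]; ring
    have e1 : 20 * L / x 0 = 20 * L * (1 / x 0) := by ring
    have e2 : (11:ℝ) / x 0 = 11 * (1 / x 0) := by ring
    rw [hcast]
    rw [e1] at h1; rw [e2] at h2
    nlinarith [mul_le_mul_of_nonneg_left hxinv (by linarith : (0:ℝ) ≤ 80 * L)]
  have hlt : ∀ i ≤ N, x i < 2/3 := by
    intro i hi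
    exact hcon i (le_trans (by exact_mod_cast Nat.cast_le.mpr hi) hNB)
  have hstep : ∀ i < N, x i * (1 + y i / 5) ≤ x (i+1) ∧ y i * (1 + x i / 10) ≤ y (i+1) := by
    intro i hi
    have h := hrec (i+1) (Nat.le_add_left 1 i) (by simpa using hlt i hi.le)
    simpa using h
  -- lower bound on log(1 + x0/10)
  have hloglb : x 0 / 20 ≤ Real.log (1 + x 0 / 10) := by
    rw [Real.le_log_iff_exp_le (by linarith)]
    have hb : (0:ℝ) < 1 - x 0 / 20 := by linarith
    have h1 : Real.exp (x 0 / 20) ≤ 1 / (1 - x 0 / 20) := by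
      rw [le_div_iff₀ hb]
      have hmul : Real.exp (x 0/20) * Real.exp (-(x 0/20)) = 1 := by
        rw [← Real.exp_add]; simp
      nlinarith [Real.add_one_le_exp (-(x 0 / 20)), Real.exp_pos (x 0/20)]
    have h2 : 1 / (1 - x 0 / 20) ≤ 1 + x 0 / 10 := by
      rw [div_le_iff₀ hb]
      nlinarith
    linarith
  -- Phase 1: log y grows linearly
  have P1 : ∀ i ≤ N, Real.log (y 0) + i * (x 0 / 20) ≤ Real.log (y i) := by
    intro i hi
    induction i with
    | zero => simp
    | succ n ih =>
      have hn : n ≤ N := Nat.le_of_succ_le hi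
      have hstepn := (hstep n (Nat.lt_of_succ_le hi)).2
      have h1 : y n * (1 + x 0 / 10) ≤ y (n+1) := by
        nlinarith [hypos n, hxge n]
      have h2 : Real.log (y n * (1 + x 0/10)) ≤ Real.log (y (n+1)) :=
        Real.log_le_log (mul_pos (hypos n) (by linarith)) h1
      rw [Real.log_mul (ne_of_gt (hypos n)) (by positivity)] at h2
      have h3 := ih hn
      push_cast
      nlinarith [hloglb]
  have hN1le : N1 ≤ N := Nat.le_add_right _ _
  have hyN1 : x 0 ≤ y N1 := by
    have h := P1 N1 hN1le
    have hceil : 20 * L / x 0 ≤ (N1:ℝ) := Nat.le_ceil _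
    have hLsub : L = Real.log (x 0) - Real.log (y 0) := by
      rw [hLdef, Real.log_div (ne_of_gt hx0pos) (ne_of_gt hy0)]
    have hmul : L ≤ (N1:ℝ) * (x 0/20) := by
      have he : 20 * L / x 0 * (x 0 / 20) = L := by field_simp
      have h' := mul_le_mul_of_nonneg_right hceil (by positivity : (0:ℝ) ≤ x 0 / 20)
      rw [he] at h'
      exact h'
    have hlog : Real.log (x 0) ≤ Real.log (y N1) := by linarith
    exact (Real.log_le_log_iff hx0pos (hypos N1)).mp hlog
  -- Phase 2: 1/min(x,y) decreases by 1/11 per step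
  set m : ℕ → ℝ := fun i => min (x i) (y i) with hm
  have hmpos : ∀ i, 0 < m i := fun i => lt_min (hxpos i) (hypos i)
  have hmlt : ∀ i ≤ N, m i < 2/3 := fun i hi => (min_le_left _ _).trans_lt (hlt i hi)
  have hmstep : ∀ i < N, m i * (1 + m i / 10) ≤ m (i+1) := by
    intro i hi
    obtain ⟨h1, h2⟩ := hstep i hi
    have hyx : m i ≤ y i := min_le_right _ _
    have hxx : m i ≤ x i := min_le_left _ _
    have hmp := (hmpos i).le
    refine le_min (le_trans ?_ h1) (le_trans ?_ h2)
    · nlinarith [hxpos i, hypos i]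
    · nlinarith [hxpos i, hypos i]
  have Q : ∀ k ≤ N2, 1 / m (N1 + k) ≤ 1 / x 0 - k / 11 := by
    intro k hk
    induction k with
    | zero =>
      have hge : x 0 ≤ m N1 := le_min (hxge N1) hyN1
      have := one_div_le_one_div_of_le hx0pos hge
      simpa using this
    | succ n ih =>
      have hn : n ≤ N2 := Nat.le_of_succ_le hk
      have hidx : N1 + n < N := by omega
      have hms := hmstep (N1+n) hidx
      have hmlt' := hmlt (N1+n) hidx.le
      have hp := hmpos (N1+n)
      have hp' := hmpos (N1+n+1)
      have key : 1 / m (N1+n+1) ≤ 1 / m (N1+n) - 1/11 := by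
        have h1 : 1 / m (N1+n+1) ≤ 1 / (m (N1+n) * (1 + m (N1+n)/10)) :=
          one_div_le_one_div_of_le (by positivity) hms
        have he : 1 / (m (N1+n) * (1 + m (N1+n)/10)) = 1 / m (N1+n) - 1/(10 + m (N1+n)) := by
          field_simp
          ring
        have h2 : (1:ℝ)/11 ≤ 1/(10 + m (N1+n)) :=
          one_div_le_one_div_of_le (by linarith) (by linarith)
        rw [he] at h1
        linarith
      have hadd : N1 + (n+1) = (N1 + n) + 1 := rfl
      rw [hadd]
      have h3 := ih hn
      push_cast
      push_cast at h3
      linarith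
  have hfin := Q N2 le_rfl
  have hceil2 : 11 / x 0 ≤ (N2:ℝ) := Nat.le_ceil _
  have hposm : (0:ℝ) < 1 / m (N1 + N2) := one_div_pos.mpr (hmpos _)
  have h11 : (11:ℝ) / x 0 = 11 * (1 / x 0) := by ring
  rw [h11] at hceil2
  have : 1 / x 0 ≤ (N2:ℝ)/11 := by linarith
  linarith
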